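/- Let G be a finite group whose Sylow 2-subgroups are cyclic. Then the set N = {g ∈ G : g has odd order} is a normal subgroup of G, and every Sylow 2-subgroup P of G is a complement to N, i.e. N ∩ P = {1} and NP = G (so that G is an internal semidirect product N ⋊ P). -/

import Mathlib

open Subgroup

private lemma sylow_two_norm_le_cent (G : Type*) [Group G] [Finite G]
    [Fact (Nat.Prime 2)]
    (hG : ∀ P : Sylow 2 G, IsCyclic (P : Subgroup G)) (P : Sylow 2 G) :
    normalizer ((P : Subgroup G) : Set G) ≤ Subgroup.centralizer (P : Set G) := by
  haveI : IsCyclic (P : Subgroup G) := hG P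
  letI : CommGroup (P : Subgroup G) := IsCyclic.commGroup
  haveI hcomm : IsMulCommutative (P : Subgroup G) := ⟨⟨mul_comm⟩⟩
  intro x hx
  set f := (P : Subgroup G).normalizerMonoidHom with hf
  have hker : (P : Subgroup G).subgroupOf (normalizer ((P : Subgroup G) : Set G)) ≤ f.ker := by
    intro y hy
    rw [hf, normalizerMonoidHom_ker, mem_subgroupOf]
    exact Subgroup.le_centralizer (P : Subgroup G) (mem_subgroupOf.mp hy)
  -- the order of f ⟨x, hx⟩ divides the (odd) index of P
  have h1 : orderOf (f ⟨x, hx⟩) ∣ f.ker.index := by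
    apply orderOf_dvd_of_pow_eq_one
    rw [← map_pow]
    exact MonoidHom.mem_ker.mp (f.ker.pow_index_mem _)
  have h2 : f.ker.index ∣ (P : Subgroup G).index :=
    (index_dvd_of_le hker).trans (relIndex_dvd_index_of_le le_normalizer)
  have hodd : ¬ 2 ∣ orderOf (f ⟨x, hx⟩) := fun h =>
    P.not_dvd_index (h.trans (h1.trans h2))
  -- the order of f ⟨x, hx⟩ divides a power of 2
  obtain ⟨n, hn⟩ := P.2.exists_card_eq
  have h3 : orderOf (f ⟨x, hx⟩) ∣ 2 ^ n := by
    have h4 : orderOf (f ⟨x, hx⟩) ∣ Nat.card (MulAut (P : Subgroup G)) :=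
      orderOf_dvd_natCard _
    rw [IsCyclic.card_mulAut, hn] at h4
    refine h4.trans ?_
    cases n with
    | zero => simp
    | succ k =>
        rw [Nat.totient_prime_pow Nat.prime_two k.succ_pos]
        simpa using pow_dvd_pow 2 k.le_succ
  have h5 : orderOf (f ⟨x, hx⟩) = 1 :=
    Nat.Coprime.eq_one_of_dvd
      (Nat.Coprime.pow_right n ((Nat.prime_two.coprime_iff_not_dvd.mpr hodd).symm)) h3
  have h6 : (⟨x, hx⟩ : normalizer ((P : Subgroup G) : Set G)) ∈ f.ker :=
    MonoidHom.mem_ker.mpr (orderOf_eq_one_iff.mp h5)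
  rw [hf, normalizerMonoidHom_ker, mem_subgroupOf] at h6
  exact h6

/-- If the Sylow 2-subgroups of a finite group `G` are cyclic, then the set of
elements of odd order is a normal subgroup `N` of `G`, and every Sylow
2-subgroup `P` is a complement to `N` (i.e. `N ∩ P = 1` and `NP = G`). -/
theorem sylow_two_cyclic_normal_complement (G : Type*) [Group G] [Finite G]
    (hG : ∀ P : Sylow 2 G, IsCyclic (P : Subgroup G)) :
    ∃ N : Subgroup G, N.Normal ∧ (∀ g : G, g ∈ N ↔ Odd (orderOf g)) ∧
      ∀ P : Sylow 2 G, N.IsComplement' (P : Subgroup G) := by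
  haveI : Fact (Nat.Prime 2) := ⟨Nat.prime_two⟩
  have hP := sylow_two_norm_le_cent G hG
  obtain ⟨P₀⟩ : Nonempty (Sylow 2 G) := inferInstance
  set N := (MonoidHom.transferSylow P₀ (hP P₀)).ker with hN
  have hcomp : N.IsComplement' (P₀ : Subgroup G) :=
    MonoidHom.ker_transferSylow_isComplement' P₀ (hP P₀)
  have hNodd : ¬ 2 ∣ Nat.card N :=
    MonoidHom.not_dvd_card_ker_transferSylow P₀ (hP P₀)
  refine ⟨N, inferInstance, fun g => ⟨fun hg => ?_, fun hg => ?_⟩, fun P => ?_⟩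
  · -- g ∈ N → odd order
    rw [← Nat.not_even_iff_odd, even_iff_two_dvd]
    exact fun h => hNodd (h.trans (N.orderOf_dvd_natCard hg))
  · -- odd order → g ∈ N
    have h1 : orderOf ((g : G ⧸ N)) ∣ orderOf g := orderOf_map_dvd (QuotientGroup.mk' N) g
    obtain ⟨n, hn⟩ := P₀.2.exists_card_eq
    have h2 : orderOf ((g : G ⧸ N)) ∣ 2 ^ n := by
      have := orderOf_dvd_natCard (g : G ⧸ N)
      rwa [← index_eq_card, hcomp.symm.index_eq_card, hn] at this
    have hodd : ¬ 2 ∣ orderOf ((g : G ⧸ N)) := by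
      intro h
      have := h.trans h1
      rw [Nat.odd_iff] at hg
      omega
    have h3 : orderOf ((g : G ⧸ N)) = 1 :=
      Nat.Coprime.eq_one_of_dvd
        (Nat.Coprime.pow_right n ((Nat.prime_two.coprime_iff_not_dvd.mpr hodd).symm)) h2
    exact (QuotientGroup.eq_one_iff g).mp (orderOf_eq_one_iff.mp h3)
  · -- complement for every Sylow 2-subgroup
    have hcard : Nat.card (P : Subgroup G) = Nat.card (P₀ : Subgroup G) := by
      rw [P.card_eq_multiplicity, P₀.card_eq_multiplicity]
    refine isComplement'_of_coprime ?_ ?_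
    · rw [hcard]; exact hcomp.card_mul
    · obtain ⟨n, hn⟩ := P.2.exists_card_eq
      rw [hn]
      exact Nat.Coprime.pow_right n ((Nat.prime_two.coprime_iff_not_dvd.mpr hNodd).symm)
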